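/- Let A and B be n×n real matrices. Then, as τ → 0, exp(τB/2)·exp(τA)·exp(τB/2) − exp(τ(A+B) + (τ³/24)·(2[A,[A,B]] + [B,[A,B]])) = O(τ⁵), where exp is the matrix exponential and [X,Y] = XY − YX. In particular, the symmetric (Strang) splitting exp(τB/2)·exp(τA)·exp(τB/2) − exp(τ(A+B)) = O(τ³). -/

import Mathlib

open Asymptotics Filter

section AlgebraPart

variable {AL : Type*} [Ring AL] [Algebra ℝ AL]

noncomputable def sTtr (m : ℕ) (x : AL) : AL := ∑ k ∈ Finset.range m, ((k.factorial : ℝ))⁻¹ • x ^ k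

noncomputable def sCC (a b : AL) : AL :=
  (2 : ℝ) • (a * (a * b - b * a) - (a * b - b * a) * a) + (b * (a * b - b * a) - (a * b - b * a) * b)

noncomputable def sLow (d c : AL) (τ : ℝ) : AL :=
  ((1:AL))
    + τ^1 • (d)
    + τ^2 • ((1/2 : ℝ) • (d*d))
    + τ^3 • ((1/24 : ℝ) • (c) + (1/6 : ℝ) • (d*d*d))
    + τ^4 • ((1/48 : ℝ) • (c*d) + (1/48 : ℝ) • (d*c) + (1/24 : ℝ) • (d*d*d*d))

noncomputable def sR2 (d c : AL) (τ : ℝ) : AL :=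
  ((1/144 : ℝ) • (c*d*d) + (1/144 : ℝ) • (d*c*d) + (1/144 : ℝ) • (d*d*c))
    + τ^1 • ((1/1152 : ℝ) • (c*c) + (1/576 : ℝ) • (c*d*d*d) + (1/576 : ℝ) • (d*c*d*d) + (1/576 : ℝ) • (d*d*c*d) + (1/576 : ℝ) • (d*d*d*c))
    + τ^2 • ((1/3456 : ℝ) • (c*c*d) + (1/3456 : ℝ) • (c*d*c) + (1/3456 : ℝ) • (d*c*c))
    + τ^3 • ((1/13824 : ℝ) • (c*c*d*d) + (1/13824 : ℝ) • (c*d*c*d) + (1/13824 : ℝ) • (c*d*d*c) + (1/13824 : ℝ) • (d*c*c*d) + (1/13824 : ℝ) • (d*c*d*c) + (1/13824 : ℝ) • (d*d*c*c))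
    + τ^4 • ((1/82944 : ℝ) • (c*c*c))
    + τ^5 • ((1/331776 : ℝ) • (c*c*c*d) + (1/331776 : ℝ) • (c*c*d*c) + (1/331776 : ℝ) • (c*d*c*c) + (1/331776 : ℝ) • (d*c*c*c))
    + τ^7 • ((1/7962624 : ℝ) • (c*c*c*c))

noncomputable def sR1 (a b : AL) (τ : ℝ) : AL :=
  ((1/48 : ℝ) • (a*a*a*a*b) + (1/48 : ℝ) • (a*a*a*b*b) + (1/96 : ℝ) • (a*a*b*b*b) + (1/384 : ℝ) • (a*b*b*b*b) + (1/48 : ℝ) • (b*a*a*a*a) + (1/24 : ℝ) • (b*a*a*a*b) + (1/32 : ℝ) • (b*a*a*b*b) + (1/96 : ℝ) • (b*a*b*b*b) + (1/48 : ℝ) • (b*b*a*a*a) + (1/32 : ℝ) • (b*b*a*a*b) + (1/64 : ℝ) • (b*b*a*b*b) + (1/96 : ℝ) • (b*b*b*a*a) + (1/96 : ℝ) • (b*b*b*a*b) + (1/384 : ℝ) • (b*b*b*b*a) + (1/128 : ℝ) • (b*b*b*b*b))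
    + τ^1 • ((1/192 : ℝ) • (a*a*a*a*b*b) + (1/288 : ℝ) • (a*a*a*b*b*b) + (1/768 : ℝ) • (a*a*b*b*b*b) + (1/96 : ℝ) • (b*a*a*a*a*b) + (1/96 : ℝ) • (b*a*a*a*b*b) + (1/192 : ℝ) • (b*a*a*b*b*b) + (1/768 : ℝ) • (b*a*b*b*b*b) + (1/192 : ℝ) • (b*b*a*a*a*a) + (1/96 : ℝ) • (b*b*a*a*a*b) + (1/128 : ℝ) • (b*b*a*a*b*b) + (1/384 : ℝ) • (b*b*a*b*b*b) + (1/288 : ℝ) • (b*b*b*a*a*a) + (1/192 : ℝ) • (b*b*b*a*a*b) + (1/384 : ℝ) • (b*b*b*a*b*b) + (1/768 : ℝ) • (b*b*b*b*a*a) + (1/768 : ℝ) • (b*b*b*b*a*b) + (5/4608 : ℝ) • (b*b*b*b*b*b))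
    + τ^2 • ((1/1152 : ℝ) • (a*a*a*a*b*b*b) + (1/2304 : ℝ) • (a*a*a*b*b*b*b) + (1/384 : ℝ) • (b*a*a*a*a*b*b) + (1/576 : ℝ) • (b*a*a*a*b*b*b) + (1/1536 : ℝ) • (b*a*a*b*b*b*b) + (1/384 : ℝ) • (b*b*a*a*a*a*b) + (1/384 : ℝ) • (b*b*a*a*a*b*b) + (1/768 : ℝ) • (b*b*a*a*b*b*b) + (1/3072 : ℝ) • (b*b*a*b*b*b*b) + (1/1152 : ℝ) • (b*b*b*a*a*a*a) + (1/576 : ℝ) • (b*b*b*a*a*a*b) + (1/768 : ℝ) • (b*b*b*a*a*b*b) + (1/2304 : ℝ) • (b*b*b*a*b*b*b) + (1/2304 : ℝ) • (b*b*b*b*a*a*a) + (1/1536 : ℝ) • (b*b*b*b*a*a*b) + (1/3072 : ℝ) • (b*b*b*b*a*b*b) + (1/9216 : ℝ) • (b*b*b*b*b*b*b))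
    + τ^3 • ((1/9216 : ℝ) • (a*a*a*a*b*b*b*b) + (1/2304 : ℝ) • (b*a*a*a*a*b*b*b) + (1/4608 : ℝ) • (b*a*a*a*b*b*b*b) + (1/1536 : ℝ) • (b*b*a*a*a*a*b*b) + (1/2304 : ℝ) • (b*b*a*a*a*b*b*b) + (1/6144 : ℝ) • (b*b*a*a*b*b*b*b) + (1/2304 : ℝ) • (b*b*b*a*a*a*a*b) + (1/2304 : ℝ) • (b*b*b*a*a*a*b*b) + (1/4608 : ℝ) • (b*b*b*a*a*b*b*b) + (1/18432 : ℝ) • (b*b*b*a*b*b*b*b) + (1/9216 : ℝ) • (b*b*b*b*a*a*a*a) + (1/4608 : ℝ) • (b*b*b*b*a*a*a*b) + (1/6144 : ℝ) • (b*b*b*b*a*a*b*b) + (1/18432 : ℝ) • (b*b*b*b*a*b*b*b) + (1/147456 : ℝ) • (b*b*b*b*b*b*b*b))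
    + τ^4 • ((1/18432 : ℝ) • (b*a*a*a*a*b*b*b*b) + (1/9216 : ℝ) • (b*b*a*a*a*a*b*b*b) + (1/18432 : ℝ) • (b*b*a*a*a*b*b*b*b) + (1/9216 : ℝ) • (b*b*b*a*a*a*a*b*b) + (1/13824 : ℝ) • (b*b*b*a*a*a*b*b*b) + (1/36864 : ℝ) • (b*b*b*a*a*b*b*b*b) + (1/18432 : ℝ) • (b*b*b*b*a*a*a*a*b) + (1/18432 : ℝ) • (b*b*b*b*a*a*a*b*b) + (1/36864 : ℝ) • (b*b*b*b*a*a*b*b*b) + (1/147456 : ℝ) • (b*b*b*b*a*b*b*b*b))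
    + τ^5 • ((1/73728 : ℝ) • (b*b*a*a*a*a*b*b*b*b) + (1/55296 : ℝ) • (b*b*b*a*a*a*a*b*b*b) + (1/110592 : ℝ) • (b*b*b*a*a*a*b*b*b*b) + (1/73728 : ℝ) • (b*b*b*b*a*a*a*a*b*b) + (1/110592 : ℝ) • (b*b*b*b*a*a*a*b*b*b) + (1/294912 : ℝ) • (b*b*b*b*a*a*b*b*b*b))
    + τ^6 • ((1/442368 : ℝ) • (b*b*b*a*a*a*a*b*b*b*b) + (1/442368 : ℝ) • (b*b*b*b*a*a*a*a*b*b*b) + (1/884736 : ℝ) • (b*b*b*b*a*a*a*b*b*b*b))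
    + τ^7 • ((1/3538944 : ℝ) • (b*b*b*b*a*a*a*a*b*b*b*b))

noncomputable def sS (d c : AL) (τ : ℝ) : AL :=
  ((1/24 : ℝ) • (c))
    + τ^1 • ((1/48 : ℝ) • (c*d) + (1/48 : ℝ) • (d*c))
    + τ^3 • ((1/1152 : ℝ) • (c*c))

lemma sTtr5_eq (x : AL) : sTtr 5 x =
    (1:AL) + x + (2:ℝ)⁻¹ • (x*x) + (6:ℝ)⁻¹ • (x*(x*x)) + (24:ℝ)⁻¹ • (x*(x*(x*x))) := by
  have h0 : Nat.factorial 0 = 1 := rfl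
  have h1 : Nat.factorial 1 = 1 := rfl
  have h2 : Nat.factorial 2 = 2 := rfl
  have h3 : Nat.factorial 3 = 6 := rfl
  have h4 : Nat.factorial 4 = 24 := rfl
  simp [sTtr, Finset.sum_range_succ, h0, h1, h2, h3, h4, pow_succ, mul_assoc]

lemma sTtr3_eq (x : AL) : sTtr 3 x = (1:AL) + x + (2:ℝ)⁻¹ • (x*x) := by
  have h0 : Nat.factorial 0 = 1 := rfl
  have h1 : Nat.factorial 1 = 1 := rfl
  have h2 : Nat.factorial 2 = 2 := rfl
  simp [sTtr, Finset.sum_range_succ, h0, h1, h2, pow_succ, mul_assoc]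

lemma sL2 (d c : AL) (τ : ℝ) :
    sTtr 5 (τ • d + (τ^3/24) • c) = sLow d c τ + τ^5 • sR2 d c τ := by
  simp only [sTtr5_eq, sLow, sR2, mul_add, add_mul, smul_add, smul_sub, sub_mul, mul_sub,
    smul_mul_assoc, mul_smul_comm, smul_smul, mul_assoc]
  match_scalars <;> ring

lemma sL1 (a b : AL) (τ : ℝ) :
    sTtr 5 ((τ/2) • b) * sTtr 5 (τ • a) * sTtr 5 ((τ/2) • b)
      = sLow (a + b) (sCC a b) τ + τ^5 • sR1 a b τ := by
  simp only [sTtr5_eq, sLow, sR1, sCC, mul_add, add_mul, smul_add, smul_sub, sub_mul, mul_sub,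
    smul_mul_assoc, mul_smul_comm, smul_smul, mul_assoc, one_mul, mul_one]
  match_scalars <;> ring

lemma sL3 (d c : AL) (τ : ℝ) :
    sTtr 3 (τ • d + (τ^3/24) • c) - sTtr 3 (τ • d) = τ^3 • sS d c τ := by
  simp only [sTtr3_eq, sS, mul_add, add_mul, smul_add, smul_sub, sub_mul, mul_sub,
    smul_mul_assoc, mul_smul_comm, smul_smul, mul_assoc, one_mul, mul_one]
  match_scalars <;> ring

lemma sLmain (a b : AL) (τ : ℝ) :
    sTtr 5 ((τ/2) • b) * sTtr 5 (τ • a) * sTtr 5 ((τ/2) • b)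
        - sTtr 5 (τ • (a + b) + (τ^3/24) • sCC a b)
      = τ^5 • (sR1 a b τ - sR2 (a + b) (sCC a b) τ) := by
  rw [sL1, sL2, smul_sub]; abel

end AlgebraPart

section AnalysisPart

variable {AL : Type*} [NormedRing AL] [NormedAlgebra ℝ AL] [CompleteSpace AL]

lemma continuous_sTtr (m : ℕ) : Continuous fun x : AL => sTtr m x := by
  unfold sTtr
  exact continuous_finset_sum _ fun k _ => (continuous_pow k).const_smul _

lemma sTail_bound {m : ℕ} (hm : 0 < m) (x : AL) :
    ‖NormedSpace.exp x - sTtr m x‖ ≤ ‖x‖ ^ m * Real.exp ‖x‖ := by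
  have hs : Summable fun k : ℕ => ((k.factorial : ℝ))⁻¹ • x ^ k :=
    NormedSpace.expSeries_summable' (𝕂 := ℝ) x
  have h1 := Summable.sum_add_tsum_nat_add m hs
  have hexp : NormedSpace.exp x = ∑' k : ℕ, ((k.factorial : ℝ))⁻¹ • x ^ k := by
    rw [NormedSpace.exp_eq_tsum ℝ]
  have heq : NormedSpace.exp x - sTtr m x
      = ∑' k : ℕ, (((k + m).factorial : ℝ))⁻¹ • x ^ (k + m) := by
    rw [hexp, sTtr, ← h1]; abel
  rw [heq]
  have hgsum : HasSum (fun k : ℕ => ‖x‖^m * (‖x‖^k / k.factorial)) (‖x‖^m * Real.exp ‖x‖) := by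
    have hts : (∑' k : ℕ, ‖x‖^k / k.factorial) = Real.exp ‖x‖ := by
      rw [Real.exp_eq_exp_ℝ, NormedSpace.exp_eq_tsum_div]
    have := (Real.summable_pow_div_factorial ‖x‖).hasSum
    rw [hts] at this
    exact this.mul_left _
  refine tsum_of_norm_bounded hgsum fun k => ?_
  have hp : ‖x ^ (k + m)‖ ≤ ‖x‖ ^ (k + m) := norm_pow_le' x (by omega)
  have hf : ((k.factorial : ℝ))⁻¹ ≥ (((k + m).factorial : ℝ))⁻¹ := by
    apply inv_anti₀
    · exact_mod_cast k.factorial_pos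
    · exact_mod_cast Nat.factorial_le (Nat.le_add_right k m)
  calc ‖(((k + m).factorial : ℝ))⁻¹ • x ^ (k + m)‖
      = (((k + m).factorial : ℝ))⁻¹ * ‖x ^ (k + m)‖ := by
        rw [norm_smul, Real.norm_eq_abs, abs_of_nonneg (by positivity)]
    _ ≤ ((k.factorial : ℝ))⁻¹ * ‖x‖ ^ (k + m) := by
        apply mul_le_mul hf hp (norm_nonneg _) (by positivity)
    _ = ‖x‖^m * (‖x‖^k / k.factorial) := by rw [pow_add]; ring

open Asymptotics Filter in
lemma isBigO_pow_of_le {E : Type*} [NormedAddCommGroup E] {f : ℝ → E} {h : ℝ → ℝ} (m : ℕ)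
    (hh : Continuous h) (hb : ∀ τ, ‖f τ‖ ≤ |τ|^m * h τ) :
    f =O[nhds (0:ℝ)] fun τ => τ ^ m := by
  refine IsBigO.of_bound (|h 0| + 1) ?_
  have hev : ∀ᶠ τ in nhds (0:ℝ), h τ < |h 0| + 1 :=
    (hh.tendsto 0).eventually (gt_mem_nhds (lt_of_le_of_lt (le_abs_self _) (lt_add_one _)))
  filter_upwards [hev] with τ hτ
  calc ‖f τ‖ ≤ |τ|^m * h τ := hb τ
    _ ≤ |τ|^m * (|h 0| + 1) :=
        mul_le_mul_of_nonneg_left hτ.le (pow_nonneg (abs_nonneg τ) m)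
    _ = (|h 0| + 1) * ‖τ^m‖ := by rw [Real.norm_eq_abs, abs_pow]; ring

open Asymptotics Filter in
lemma tail_isBigO {m : ℕ} (hm : 0 < m) (N : ℝ → AL) (hN : Continuous N) :
    (fun τ : ℝ => NormedSpace.exp (τ • N τ) - sTtr m (τ • N τ)) =O[nhds (0:ℝ)]
      fun τ => τ ^ m := by
  refine isBigO_pow_of_le (h := fun τ => ‖N τ‖^m * Real.exp ‖τ • N τ‖) m ?_ fun τ => ?_
  · exact ((hN.norm.pow m).mul (Real.continuous_exp.comp (continuous_id.smul hN).norm))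
  · calc ‖NormedSpace.exp (τ • N τ) - sTtr m (τ • N τ)‖
        ≤ ‖τ • N τ‖^m * Real.exp ‖τ • N τ‖ := sTail_bound hm _
      _ = |τ|^m * (‖N τ‖^m * Real.exp ‖τ • N τ‖) := by
          rw [norm_smul, Real.norm_eq_abs, mul_pow]; ring

open Asymptotics Filter in
lemma smul_isBigO {m : ℕ} (R : ℝ → AL) (hR : Continuous R) :
    (fun τ : ℝ => τ ^ m • R τ) =O[nhds (0:ℝ)] fun τ => τ ^ m := by
  refine isBigO_pow_of_le (h := fun τ => ‖R τ‖) m hR.norm fun τ => ?_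
  rw [norm_smul, Real.norm_eq_abs, abs_pow]

open Asymptotics Filter NormedSpace in
lemma strangO5 (a b : AL) :
    (fun τ : ℝ => exp ((τ/2) • b) * exp (τ • a) * exp ((τ/2) • b)
        - exp (τ • (a + b) + (τ^3/24) • sCC a b)) =O[nhds (0:ℝ)] fun τ => τ ^ 5 := by
  have hrw1 : ∀ τ : ℝ, τ • ((2:ℝ)⁻¹ • b) = (τ/2) • b := fun τ => by module
  have hrw2 : ∀ τ : ℝ, τ • ((a + b) + (τ^2/24) • sCC a b)
      = τ • (a + b) + (τ^3/24) • sCC a b := fun τ => by module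
  have h₁ : (fun τ : ℝ => exp ((τ/2) • b) - sTtr 5 ((τ/2) • b)) =O[nhds (0:ℝ)]
      fun τ => τ ^ 5 := by
    have := tail_isBigO (m := 5) (by norm_num) (fun _ : ℝ => (2:ℝ)⁻¹ • b) (by fun_prop)
    simpa only [hrw1] using this
  have h₂ : (fun τ : ℝ => exp (τ • a) - sTtr 5 (τ • a)) =O[nhds (0:ℝ)] fun τ => τ ^ 5 :=
    tail_isBigO (m := 5) (by norm_num) (fun _ : ℝ => a) (by fun_prop)
  have h₃ : (fun τ : ℝ => exp (τ • (a + b) + (τ^3/24) • sCC a b)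
      - sTtr 5 (τ • (a + b) + (τ^3/24) • sCC a b)) =O[nhds (0:ℝ)] fun τ => τ ^ 5 := by
    have := tail_isBigO (m := 5) (by norm_num)
      (fun τ : ℝ => (a + b) + (τ^2/24) • sCC a b) (by fun_prop)
    simpa only [hrw2] using this
  have hbe₁ : (fun τ : ℝ => exp ((τ/2) • b)) =O[nhds (0:ℝ)] fun _ => (1:ℝ) :=
    (((show Continuous (exp : AL → AL) from continuous_iff_continuousAt.2 fun x => (exp_analytic (𝕂 := ℝ) x).continuousAt).comp (show Continuous fun τ : ℝ => (τ/2) • b by fun_prop)).tendsto 0).isBigO_one ℝ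
  have hbe₂ : (fun τ : ℝ => exp (τ • a)) =O[nhds (0:ℝ)] fun _ => (1:ℝ) :=
    (((show Continuous (exp : AL → AL) from continuous_iff_continuousAt.2 fun x => (exp_analytic (𝕂 := ℝ) x).continuousAt).comp (show Continuous fun τ : ℝ => τ • a by fun_prop)).tendsto 0).isBigO_one ℝ
  have hbp₁ : (fun τ : ℝ => sTtr 5 ((τ/2) • b)) =O[nhds (0:ℝ)] fun _ => (1:ℝ) :=
    (((continuous_sTtr 5).comp (show Continuous fun τ : ℝ => (τ/2) • b by fun_prop)).tendsto 0).isBigO_one ℝ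
  have hbp₂ : (fun τ : ℝ => sTtr 5 (τ • a)) =O[nhds (0:ℝ)] fun _ => (1:ℝ) :=
    (((continuous_sTtr 5).comp (show Continuous fun τ : ℝ => τ • a by fun_prop)).tendsto 0).isBigO_one ℝ
  have t1 : (fun τ : ℝ => (exp ((τ/2) • b) - sTtr 5 ((τ/2) • b))
      * (exp (τ • a) * exp ((τ/2) • b))) =O[nhds (0:ℝ)] fun τ => τ ^ 5 := by
    simpa using h₁.mul (hbe₂.mul hbe₁)
  have t2 : (fun τ : ℝ => sTtr 5 ((τ/2) • b)
      * ((exp (τ • a) - sTtr 5 (τ • a)) * exp ((τ/2) • b))) =O[nhds (0:ℝ)]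
      fun τ => τ ^ 5 := by
    simpa using hbp₁.mul (h₂.mul hbe₁)
  have t3 : (fun τ : ℝ => (sTtr 5 ((τ/2) • b) * sTtr 5 (τ • a))
      * (exp ((τ/2) • b) - sTtr 5 ((τ/2) • b))) =O[nhds (0:ℝ)] fun τ => τ ^ 5 := by
    simpa using (hbp₁.mul hbp₂).mul h₁
  have hFE : (fun τ : ℝ => exp ((τ/2) • b) * exp (τ • a) * exp ((τ/2) • b)
      - sTtr 5 ((τ/2) • b) * sTtr 5 (τ • a) * sTtr 5 ((τ/2) • b)) =O[nhds (0:ℝ)]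
      fun τ => τ ^ 5 := by
    refine ((t1.add t2).add t3).congr (fun τ => ?_) fun _ => rfl
    noncomm_ring
  have hEq : (fun τ : ℝ => sTtr 5 ((τ/2) • b) * sTtr 5 (τ • a) * sTtr 5 ((τ/2) • b)
      - sTtr 5 (τ • (a + b) + (τ^3/24) • sCC a b)) =O[nhds (0:ℝ)] fun τ => τ ^ 5 := by
    have hcont : Continuous fun τ : ℝ => sR1 a b τ - sR2 (a + b) (sCC a b) τ := by
      unfold sR1 sR2; fun_prop
    have := smul_isBigO (m := 5) _ hcont
    refine this.congr (fun τ => ?_) fun _ => rfl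
    rw [← sLmain]
  refine (((hFE.add hEq).sub h₃).congr (fun τ => ?_) fun _ => rfl)
  abel

open Asymptotics Filter NormedSpace in
lemma strangO3 (a b : AL) :
    (fun τ : ℝ => exp ((τ/2) • b) * exp (τ • a) * exp ((τ/2) • b)
        - exp (τ • (a + b))) =O[nhds (0:ℝ)] fun τ => τ ^ 3 := by
  have h53 : (fun τ : ℝ => τ ^ 5) =O[nhds (0:ℝ)] fun τ => τ ^ 3 := by
    refine IsBigO.of_bound 1 ?_
    filter_upwards [Metric.ball_mem_nhds (0:ℝ) one_pos] with τ hτ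
    rw [Metric.mem_ball, Real.dist_eq, sub_zero] at hτ
    rw [Real.norm_eq_abs, Real.norm_eq_abs, abs_pow, abs_pow, one_mul]
    exact pow_le_pow_of_le_one (abs_nonneg τ) hτ.le (by norm_num)
  have hrw2 : ∀ τ : ℝ, τ • ((a + b) + (τ^2/24) • sCC a b)
      = τ • (a + b) + (τ^3/24) • sCC a b := fun τ => by module
  have h₃ : (fun τ : ℝ => exp (τ • (a + b) + (τ^3/24) • sCC a b)
      - sTtr 3 (τ • (a + b) + (τ^3/24) • sCC a b)) =O[nhds (0:ℝ)] fun τ => τ ^ 3 := by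
    have := tail_isBigO (m := 3) (by norm_num)
      (fun τ : ℝ => (a + b) + (τ^2/24) • sCC a b) (by fun_prop)
    simpa only [hrw2] using this
  have h₄ : (fun τ : ℝ => exp (τ • (a + b)) - sTtr 3 (τ • (a + b))) =O[nhds (0:ℝ)]
      fun τ => τ ^ 3 := tail_isBigO (m := 3) (by norm_num) (fun _ : ℝ => a + b) (by fun_prop)
  have h₅ : (fun τ : ℝ => sTtr 3 (τ • (a + b) + (τ^3/24) • sCC a b)
      - sTtr 3 (τ • (a + b))) =O[nhds (0:ℝ)] fun τ => τ ^ 3 := by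
    have hcont : Continuous fun τ : ℝ => sS (a + b) (sCC a b) τ := by unfold sS; fun_prop
    have := smul_isBigO (m := 3) _ hcont
    refine this.congr (fun τ => ?_) fun _ => rfl
    rw [← sL3]
  have hGd : (fun τ : ℝ => exp (τ • (a + b) + (τ^3/24) • sCC a b) - exp (τ • (a + b)))
      =O[nhds (0:ℝ)] fun τ => τ ^ 3 := by
    have comb := (h₃.add h₅).sub h₄
    refine comb.congr (fun τ => ?_) fun _ => rfl
    abel
  have hFG := (strangO5 a b).trans h53
  refine ((hFG.add hGd).congr (fun τ => ?_) fun _ => rfl)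
  abel

end AnalysisPart

section MatrixPart

attribute [local instance] Matrix.linftyOpNormedAddCommGroup Matrix.linftyOpNormedRing
  Matrix.linftyOpNormedAlgebra

variable {n : ℕ}

lemma entry_norm_le (M : Matrix (Fin n) (Fin n) ℝ) (i j : Fin n) : ‖M i j‖ ≤ ‖M‖ := by
  rw [Matrix.linfty_opNorm_def]
  have h1 : ‖M i j‖₊ ≤ ∑ j', ‖M i j'‖₊ :=
    Finset.single_le_sum (f := fun j' => ‖M i j'‖₊) (fun _ _ => zero_le) (Finset.mem_univ j)
  have h2 : (∑ j', ‖M i j'‖₊) ≤ Finset.univ.sup fun i => ∑ j', ‖M i j'‖₊ :=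
    Finset.le_sup (f := fun i => ∑ j', ‖M i j'‖₊) (Finset.mem_univ i)
  exact_mod_cast h1.trans h2

open Asymptotics Filter NormedSpace in
lemma strang_entry5 (A B : Matrix (Fin n) (Fin n) ℝ) (i j : Fin n) :
    (fun τ : ℝ => (exp ((τ/2) • B) * exp (τ • A) * exp ((τ/2) • B)
        - exp (τ • (A + B) + (τ^3/24) • sCC A B)) i j) =O[nhds (0:ℝ)] fun τ => τ ^ 5 := by
  refine (IsBigO.of_bound 1 (Eventually.of_forall fun τ => ?_)).trans (strangO5 A B)
  rw [one_mul]
  exact entry_norm_le _ i j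

open Asymptotics Filter NormedSpace in
lemma strang_entry3 (A B : Matrix (Fin n) (Fin n) ℝ) (i j : Fin n) :
    (fun τ : ℝ => (exp ((τ/2) • B) * exp (τ • A) * exp ((τ/2) • B)
        - exp (τ • (A + B))) i j) =O[nhds (0:ℝ)] fun τ => τ ^ 3 := by
  refine (IsBigO.of_bound 1 (Eventually.of_forall fun τ => ?_)).trans (strangO3 A B)
  rw [one_mul]
  exact entry_norm_le _ i j

end MatrixPart

attribute [local instance] Matrix.normedAddCommGroup

theorem strang_splitting_matrices (n : ℕ) (A B : Matrix (Fin n) (Fin n) ℝ) :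
    ((fun τ : ℝ =>
        NormedSpace.exp ((τ / 2) • B) * NormedSpace.exp (τ • A) *
            NormedSpace.exp ((τ / 2) • B) -
          NormedSpace.exp (τ • (A + B) +
            (τ ^ 3 / 24) •
              ((2 : ℝ) • (A * (A * B - B * A) - (A * B - B * A) * A) +
                (B * (A * B - B * A) - (A * B - B * A) * B))))
        =O[nhds (0 : ℝ)] fun τ : ℝ => τ ^ 5) ∧
    ((fun τ : ℝ =>
        NormedSpace.exp ((τ / 2) • B) * NormedSpace.exp (τ • A) *
            NormedSpace.exp ((τ / 2) • B) -
          NormedSpace.exp (τ • (A + B)))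
        =O[nhds (0 : ℝ)] fun τ : ℝ => τ ^ 3) := by
  constructor
  · exact isBigO_pi.mpr fun i => isBigO_pi.mpr fun j => strang_entry5 A B i j
  · exact isBigO_pi.mpr fun i => isBigO_pi.mpr fun j => strang_entry3 A B i j
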